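/- Let A > 0, α > 2, and let v(y,s) = Re[ (1/s) · exp( −A (y₁+iy₂)^α / s^α + |y|²/(4s) ) ] (principal branch). Then: (i) for every δ ∈ (0, π/(2α)) there exist R > 0 and C > 0 such that |v(y,s)| ≤ C for all s ∈ (0,1] and all y ∈ ℝ² with |arg(y₁+iy₂)| ≤ π/(2α) − δ and |y| ≥ R; and (ii) for every y ∈ ℝ² with y₁+iy₂ ≠ 0 and |arg(y₁+iy₂)| < π/(2α), one has v(y,s) → 0 as s → 0⁺. -/

import Mathlib

open Real Set Filter

lemma cpow_re_eq {z : ℂ} (hz : z ≠ 0) (α : ℝ) :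
    (z ^ (α : ℂ)).re = ‖z‖ ^ α * Real.cos (α * z.arg) := by
  rw [Complex.cpow_def_of_ne_zero hz, Complex.exp_re]
  have h1 : (Complex.log z * (α:ℂ)).re = α * Real.log ‖z‖ := by
    simp [Complex.mul_re, Complex.log_re, mul_comm]
  have h2 : (Complex.log z * (α:ℂ)).im = α * z.arg := by
    simp [Complex.mul_im, Complex.log_im, mul_comm]
  rw [h1, h2, Real.rpow_def_of_pos (norm_pos_iff.mpr hz), mul_comm (Real.log _)]

lemma exp_term_re (A α s y₁ y₂ : ℝ) (hs : 0 < s)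
    (hz : (y₁:ℂ) + (y₂:ℂ) * Complex.I ≠ 0) :
    ((-(A : ℂ) * ((y₁ : ℂ) + (y₂ : ℂ) * Complex.I) ^ (α : ℂ) / ((s ^ α : ℝ) : ℂ)
        + (((y₁ ^ 2 + y₂ ^ 2) / (4 * s) : ℝ) : ℂ)).re)
      = -(A * ((Real.sqrt (y₁^2+y₂^2)) ^ α *
          Real.cos (α * Complex.arg ((y₁:ℂ) + (y₂:ℂ) * Complex.I)))) / s ^ α
        + (y₁ ^ 2 + y₂ ^ 2) / (4 * s) := by
  have h := cpow_re_eq hz α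
  rw [Complex.norm_add_mul_I] at h
  have hsα : s ^ α ≠ 0 := (Real.rpow_pos_of_pos hs α).ne'
  have hs' : s ≠ 0 := hs.ne'
  simp [Complex.add_re, Complex.div_re, Complex.normSq_apply, Complex.ofReal_re,
    Complex.ofReal_im, Complex.neg_re, Complex.neg_im, Complex.mul_re, Complex.mul_im, h,
    ← Complex.ofReal_pow]
  field_simp

/-- Escauriaza's function
`v(y,s) = Re[(1/s) exp(-A z^α / s^α + |y|²/(4s))]`, `z = y₁ + i y₂`,
with the principal branch of `z^α`. -/
noncomputable def escV (A α y₁ y₂ s : ℝ) : ℝ :=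
  ((1 / (s : ℂ)) * Complex.exp
      (-(A : ℂ) * ((y₁ : ℂ) + (y₂ : ℂ) * Complex.I) ^ (α : ℂ) / ((s ^ α : ℝ) : ℂ)
        + (((y₁ ^ 2 + y₂ ^ 2) / (4 * s) : ℝ) : ℂ))).re

lemma escV_abs_le (A α y₁ y₂ s : ℝ) (hs : 0 < s)
    (hz : (y₁:ℂ) + (y₂:ℂ) * Complex.I ≠ 0) :
    |escV A α y₁ y₂ s| ≤ (1/s) * Real.exp
      (-(A * ((Real.sqrt (y₁^2+y₂^2)) ^ α *
          Real.cos (α * Complex.arg ((y₁:ℂ) + (y₂:ℂ) * Complex.I)))) / s ^ α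
        + (y₁ ^ 2 + y₂ ^ 2) / (4 * s)) := by
  rw [← exp_term_re A α s y₁ y₂ hs hz]
  calc |escV A α y₁ y₂ s| ≤ ‖((1 / (s : ℂ)) * Complex.exp
      (-(A : ℂ) * ((y₁ : ℂ) + (y₂ : ℂ) * Complex.I) ^ (α : ℂ) / ((s ^ α : ℝ) : ℂ)
        + (((y₁ ^ 2 + y₂ ^ 2) / (4 * s) : ℝ) : ℂ)))‖ := Complex.abs_re_le_norm _
    _ = _ := by
      rw [norm_mul, Complex.norm_exp]
      congr 1
      rw [norm_div, norm_one, Complex.norm_real, Real.norm_eq_abs, abs_of_pos hs]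

lemma one_div_mul_exp_le (s E : ℝ) (hs : 0 < s) (hE : E ≤ -(1/s)) :
    (1/s) * Real.exp E ≤ 1 := by
  have h2 : 1/s ≤ Real.exp (1/s) := by linarith [Real.add_one_le_exp (1/s)]
  calc (1/s) * Real.exp E ≤ (1/s) * Real.exp (-(1/s)) := by
        apply mul_le_mul_of_nonneg_left (Real.exp_le_exp.2 hE) (by positivity)
    _ = (1/s) / Real.exp (1/s) := by rw [Real.exp_neg]; ring
    _ ≤ 1 := (div_le_one (Real.exp_pos _)).2 h2

set_option maxHeartbeats 1600000 in
/-- (i) `v` is bounded for `s ∈ (0,1]` on each strict subsector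
`|arg z| ≤ π/(2α) - δ`, `|y| ≥ R`, and (ii) `v(y,s) → 0` as `s → 0⁺` at every
point of the open sector `|arg z| < π/(2α)`. -/
theorem escV_bounded_and_decays (A α : ℝ) (hA : 0 < A) (hα : 2 < α) :
    (∀ δ : ℝ, 0 < δ → δ < π / (2 * α) →
      ∃ R : ℝ, 0 < R ∧ ∃ C : ℝ, 0 < C ∧
        ∀ s ∈ Set.Ioc (0 : ℝ) 1, ∀ y₁ y₂ : ℝ,
          |Complex.arg ((y₁ : ℂ) + (y₂ : ℂ) * Complex.I)| ≤ π / (2 * α) - δ →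
          R ≤ Real.sqrt (y₁ ^ 2 + y₂ ^ 2) →
          |escV A α y₁ y₂ s| ≤ C) ∧
    (∀ y₁ y₂ : ℝ, ((y₁ : ℂ) + (y₂ : ℂ) * Complex.I) ≠ 0 →
      |Complex.arg ((y₁ : ℂ) + (y₂ : ℂ) * Complex.I)| < π / (2 * α) →
      Filter.Tendsto (fun s => escV A α y₁ y₂ s)
        (nhdsWithin 0 (Set.Ioi 0)) (nhds 0)) := by
  have hα0 : (0:ℝ) < α := by linarith
  constructor
  · -- Part (i)
    intro δ hδ0 hδ
    have hαδ : 0 < α * δ := by positivity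
    have hαδ2 : α * δ < π/2 := by
      have h := (mul_lt_mul_iff_right₀ hα0).2 hδ
      have h2 : α * (π/(2*α)) = π/2 := by field_simp
      linarith
    set c := Real.sin (α*δ) with hc
    have hc0 : 0 < c := Real.sin_pos_of_pos_of_lt_pi hαδ (by linarith [Real.pi_pos])
    set B := (5/(4*(A*c))) ^ ((α-2)⁻¹) with hBdef
    refine ⟨max 1 B, lt_of_lt_of_le one_pos (le_max_left _ _), 1, one_pos, ?_⟩
    intro s hs y₁ y₂ harg hr
    set z : ℂ := (y₁:ℂ) + (y₂:ℂ) * Complex.I with hzdef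
    set r := Real.sqrt (y₁^2+y₂^2) with hrdef
    have hr1 : 1 ≤ r := le_trans (le_max_left _ _) hr
    have hr0 : 0 < r := lt_of_lt_of_le one_pos hr1
    have habs : ‖z‖ = r := Complex.norm_add_mul_I y₁ y₂
    have hz : z ≠ 0 := by
      intro h
      rw [h, norm_zero] at habs
      linarith
    set θ := Complex.arg z with hθdef
    -- cosine lower bound
    have hcos : c ≤ Real.cos (α*θ) := by
      have h1 : |α*θ| = α*|θ| := by rw [abs_mul, abs_of_pos hα0]
      have h2 : α*|θ| ≤ π/2 - α*δ := by
        have := mul_le_mul_of_nonneg_left harg hα0.le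
        have h3 : α * (π/(2*α) - δ) = π/2 - α*δ := by field_simp
        linarith
      calc c = Real.cos (π/2 - α*δ) := (Real.cos_pi_div_two_sub _).symm
        _ ≤ Real.cos |α*θ| := by
            apply Real.cos_le_cos_of_nonneg_of_le_pi (abs_nonneg _)
            · linarith [Real.pi_pos]
            · rw [h1]; exact h2
        _ = Real.cos (α*θ) := Real.cos_abs _
    -- rpow facts
    have hsα0 : 0 < s^α := Real.rpow_pos_of_pos hs.1 α
    have hsαs : s^α ≤ s := by
      have := Real.rpow_le_rpow_of_exponent_ge hs.1 hs.2 (by linarith : (1:ℝ) ≤ α)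
      rwa [Real.rpow_one] at this
    have hrα : r^α = r^(α-2) * r^2 := by
      rw [← Real.rpow_natCast r 2, ← Real.rpow_add hr0]
      norm_num
    have hB2 : B ^ (α-2) = 5/(4*(A*c)) := by
      rw [hBdef]
      exact Real.rpow_inv_rpow (by positivity) (by intro h; rw [sub_eq_zero] at h; linarith)
    have hBr : 5/(4*(A*c)) ≤ r^(α-2) := by
      rw [← hB2]
      apply Real.rpow_le_rpow (by positivity) (le_trans (le_max_right _ _) hr) (by linarith)
    have h54 : (5/4) ≤ A*c*r^(α-2) := by
      have := mul_le_mul_of_nonneg_left hBr (by positivity : (0:ℝ) ≤ A*c)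
      have heq : A*c*(5/(4*(A*c))) = 5/4 := by field_simp
      linarith
    have hrsq : y₁^2 + y₂^2 = r^2 := (Real.sq_sqrt (by positivity)).symm
    have hrα0 : 0 ≤ r^α := (Real.rpow_pos_of_pos hr0 α).le
    have hrα2 : 0 ≤ r^(α-2) := (Real.rpow_pos_of_pos hr0 (α-2)).le
    -- key exponent bound
    have hkey : -(A * (r ^ α * Real.cos (α*θ))) / s ^ α + (y₁^2+y₂^2) / (4*s) ≤ -(1/s) := by
      have hX : 0 ≤ A * c * r ^ α := by positivity
      have e1 : -(A * (r ^ α * Real.cos (α*θ))) / s ^ α ≤ -(A * c * r ^ α) / s ^ α := by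
        apply (div_le_div_iff_of_pos_right hsα0).mpr
        nlinarith [mul_nonneg (mul_nonneg hA.le hrα0) (sub_nonneg.2 hcos)]
      have e2 : -(A * c * r ^ α) / s ^ α ≤ -(A * c * r ^ α) / s := by
        rw [neg_div, neg_div, neg_le_neg_iff]
        gcongr
      have e3 : -(A * c * r ^ α) / s + (y₁^2+y₂^2) / (4*s)
          = (-(A * c * r ^ α) + r^2/4) / s := by
        rw [hrsq]; ring
      have e4 : (5/4)*r^2 ≤ A*c*r^α := by
        have := mul_le_mul_of_nonneg_right h54 (sq_nonneg r)
        rw [hrα]; linarith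
      have e5 : (-(A * c * r ^ α) + r^2/4) / s ≤ -(1/s) := by
        rw [← neg_div]
        apply (div_le_div_iff_of_pos_right hs.1).mpr
        nlinarith [hr1]
      linarith
    exact le_trans (escV_abs_le A α y₁ y₂ s hs.1 hz) (one_div_mul_exp_le s _ hs.1 hkey)
  · -- Part (ii)
    intro y₁ y₂ hz harg
    set z : ℂ := (y₁:ℂ) + (y₂:ℂ) * Complex.I with hzdef
    set r := Real.sqrt (y₁^2+y₂^2) with hrdef
    set θ := Complex.arg z with hθdef
    have habs : ‖z‖ = r := Complex.norm_add_mul_I y₁ y₂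
    have hr0 : 0 < r := habs ▸ norm_pos_iff.mpr hz
    have hαθ : |α*θ| < π/2 := by
      rw [abs_mul, abs_of_pos hα0]
      have := (mul_lt_mul_iff_right₀ hα0).2 harg
      have h2 : α * (π/(2*α)) = π/2 := by field_simp
      linarith
    have hθlt := abs_lt.1 hαθ
    have hcos : 0 < Real.cos (α*θ) :=
      Real.cos_pos_of_mem_Ioo ⟨by linarith [hθlt.1], hθlt.2⟩
    set K := A * (r^α * Real.cos (α*θ)) with hKdef
    have hrα0 : 0 < r^α := Real.rpow_pos_of_pos hr0 α
    have hK : 0 < K := mul_pos hA (mul_pos hrα0 hcos)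
    set D := (y₁^2+y₂^2)/4 with hDdef
    have hD0 : 0 ≤ D := by positivity
    set s₁ := (K/(D+1)) ^ ((α-1)⁻¹) with hs₁def
    have hKD : 0 < K/(D+1) := div_pos hK (by linarith)
    have hs₁ : 0 < s₁ := Real.rpow_pos_of_pos hKD _
    have hs₁pow : s₁ ^ (α-1) = K/(D+1) :=
      Real.rpow_inv_rpow hKD.le (by intro h; rw [sub_eq_zero] at h; linarith)
    set s₀ := min 1 s₁ with hs₀def
    have hs₀ : 0 < s₀ := lt_min one_pos hs₁
    have hg : Tendsto (fun s : ℝ => s⁻¹ ^ 1 * Real.exp (-s⁻¹))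
        (nhdsWithin 0 (Set.Ioi 0)) (nhds 0) :=
      (tendsto_pow_mul_exp_neg_atTop_nhds_zero 1).comp tendsto_inv_nhdsGT_zero
    apply squeeze_zero_norm' ?_ hg
    filter_upwards [Ioo_mem_nhdsGT_of_mem (Set.left_mem_Ico.2 hs₀)] with s hsmem
    obtain ⟨hs, hss₀⟩ := hsmem
    have hkey : -K / s ^ α + (y₁^2+y₂^2) / (4*s) ≤ -(1/s) := by
      have hsα1 : s ^ (α-1) ≤ K/(D+1) := by
        rw [← hs₁pow]
        exact Real.rpow_le_rpow hs.le (le_trans hss₀.le (min_le_right _ _)) (by linarith)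
      have hsplit : s ^ α = s ^ (α-1) * s := by
        have h := Real.rpow_add_one hs.ne' (α-1)
        rw [sub_add_cancel] at h
        exact h
      have hsα1pos : 0 < s ^ (α-1) := Real.rpow_pos_of_pos hs _
      have hm : (D+1) * s ^ (α-1) ≤ K := by
        rw [← le_div_iff₀' (by positivity : (0:ℝ) < D+1)]
        exact hsα1
      have e1 : -K / s ^ α + (y₁^2+y₂^2) / (4*s)
          = (-(K / s ^ (α-1)) + D) / s := by
        rw [hsplit, hDdef]
        field_simp
      have e2 : -(K / s ^ (α-1)) + D ≤ -1 := by
        have : D + 1 ≤ K / s ^ (α-1) := by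
          rw [le_div_iff₀ hsα1pos]
          exact hm
        linarith
      rw [e1, show -(1/s) = -1/s from (neg_div s 1).symm]
      exact (div_le_div_iff_of_pos_right hs).mpr e2
    have hbound := escV_abs_le A α y₁ y₂ s hs hz
    rw [Real.norm_eq_abs]
    calc |escV A α y₁ y₂ s|
        ≤ (1/s) * Real.exp (-(K) / s ^ α + (y₁^2+y₂^2) / (4*s)) := hbound
      _ ≤ s⁻¹ ^ 1 * Real.exp (-s⁻¹) := by
          rw [pow_one, ← one_div]
          apply mul_le_mul_of_nonneg_left _ (by positivity)
          exact Real.exp_le_exp.2 hkey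
      _ ≤ s⁻¹ ^ 1 * Real.exp (-s⁻¹) := le_refl _
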